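/- arXiv:2211.07033 — 3 statements merged into one kernel-verified Lean document; each statement's English description precedes it below -/
import Mathlib

section
/- Let H⃗ be an acyclic oriented graph on h vertices with at least one arc, and let R = R⃗(H⃗) be its orientation Ramsey number. For every n ≥ R and every set F ⊆ E(K_n): if there exists an orientation F⃗ of F containing at most (2·C(R,h))^{-1}·C(n,h) copies of H⃗, then |E(K_n) \ F| ≥ n²/(2R²). -/
/-- `o` is an orientation of the simple graph `G`: every edge of `G` is assigned
exactly one direction, and there are no other arcs. -/
def IsOrientation {α : Type*} (G : SimpleGraph α) (o : α → α → Prop) : Prop :=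
  (∀ u v, o u v → G.Adj u v) ∧ ∀ u v, G.Adj u v → (o u v ↔ ¬ o v u)

/-- The digraph `o` contains a (not necessarily induced) copy of the oriented graph `H`
as a subdigraph. -/
def HasCopy {α β : Type*} (o : α → α → Prop) (H : β → β → Prop) : Prop :=
  ∃ f : β → α, Function.Injective f ∧ ∀ a b, H a b → o (f a) (f b)

/-- `G → H⃗`: every orientation of `G` contains a copy of `H`. -/
def Arrows {α β : Type*} (G : SimpleGraph α) (H : β → β → Prop) : Prop :=
  ∀ o : α → α → Prop, IsOrientation G o → HasCopy o H
/-- A digraph is acyclic if it has no directed cycles, i.e. the transitive closure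
of its arc relation is irreflexive. -/
def RelAcyclic {β : Type*} (H : β → β → Prop) : Prop :=
  Irreflexive (Relation.TransGen H)

/-- The orientation Ramsey number `R⃗(H⃗) = inf{n : K_n → H⃗}`. -/
noncomputable def orientationRamsey {β : Type*} (H : β → β → Prop) : ℕ :=
  sInf {n : ℕ | Arrows (SimpleGraph.completeGraph (Fin n)) H}

/-- `o` is an orientation of the set `F` of edges of `K_n`. -/
def IsOrientationOfEdges (n : ℕ) (F : Set (Sym2 (Fin n))) (o : Fin n → Fin n → Prop) : Prop :=
  (∀ u v, o u v → s(u, v) ∈ F) ∧ ∀ u v, s(u, v) ∈ F → (o u v ↔ ¬ o v u)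

/-- The number of copies of the oriented graph `H` contained in the digraph `o` on `[n]`:
a copy is recorded by its vertex set together with its arc set. -/
noncomputable def copyCount {β : Type*} (H : β → β → Prop) (n : ℕ)
    (o : Fin n → Fin n → Prop) : ℕ :=
  {q : Set (Fin n) × Set (Fin n × Fin n) |
    ∃ f : β → Fin n, Function.Injective f ∧ (∀ a b, H a b → o (f a) (f b)) ∧
      q.1 = Set.range f ∧ q.2 = {p | ∃ a b, H a b ∧ p = (f a, f b)}}.ncard

open Finset in
lemma aux_supersets {α : Type*} [Fintype α] [DecidableEq α] (t : Finset α) (R : ℕ) :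
    ((Finset.univ.powersetCard R).filter (fun S => t ⊆ S)).card
      ≤ (Fintype.card α - t.card).choose (R - t.card) := by
  have : ((Finset.univ \ t).powersetCard (R - t.card)).card
      = (Fintype.card α - t.card).choose (R - t.card) := by
    rw [Finset.card_powersetCard, Finset.card_sdiff_of_subset (Finset.subset_univ t), Finset.card_univ]
  rw [← this]
  apply Finset.card_le_card_of_injOn (fun S => S \ t)
  · intro S hS
    simp only [Finset.mem_coe, Finset.mem_filter, Finset.mem_powersetCard, Finset.subset_univ, true_and] at hS
    rw [Finset.mem_coe, Finset.mem_powersetCard]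
    exact ⟨Finset.sdiff_subset_sdiff (Finset.subset_univ S) le_rfl,
      by rw [Finset.card_sdiff_of_subset hS.2, hS.1]⟩
  · intro S hS S' hS' hEq
    simp only [Finset.coe_filter, Set.mem_setOf_eq, Finset.mem_powersetCard] at hS hS'
    have : S \ t ∪ t = S' \ t ∪ t := by simp only at hEq; rw [hEq]
    rwa [Finset.sdiff_union_of_subset hS.2, Finset.sdiff_union_of_subset hS'.2] at this

lemma aux_two_choose (k : ℕ) : 2 * k.choose 2 = k * (k - 1) := by
  rw [Nat.choose_two_right]
  cases k with
  | zero => simp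
  | succ p =>
    rw [Nat.succ_sub_one]
    have h2 : 2 ∣ (p + 1) * p := by
      rcases Nat.even_or_odd p with hp | hp
      · exact Dvd.dvd.mul_left hp.two_dvd _
      · exact Dvd.dvd.mul_right (Odd.add_one hp).two_dvd _
    exact Nat.mul_div_cancel' h2

lemma aux_num {a r K C : ℝ} (h2r : 2 ≤ r) (hra : r ≤ a) (hK : 0 < K) (hC : 0 < C)
    (hId : K * (r * (r - 1)) = a * (a - 1) * C) : a ^ 2 * C ≤ r ^ 2 * K := by
  nlinarith [hId, mul_nonneg (mul_nonneg (by linarith : (0:ℝ) ≤ r) hK.le)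
    (by linarith : (0:ℝ) ≤ a - r), hC.le, hK.le]

lemma aux_num2 {a r K C m : ℝ} (hr : 0 < r) (hC : 0 < C) (hm : 0 ≤ m)
    (hhalf : K / 2 ≤ m * C) (hnum : a ^ 2 * C ≤ r ^ 2 * K) :
    a ^ 2 ≤ m * (2 * r ^ 2) := by
  have h4 : r ^ 2 * K ≤ 2 * r ^ 2 * (m * C) := by nlinarith [sq_nonneg r]
  have h5 : a ^ 2 * C ≤ (m * (2 * r ^ 2)) * C := by nlinarith
  exact le_of_mul_le_mul_right h5 hC

/-- Saturation: if some orientation of `F ⊆ E(K_n)` has at most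
`(2·C(R,h))⁻¹·C(n,h)` copies of `H⃗`, then at least `n²/(2R²)` edges of `K_n` are
missing from `F`, where `R = R⃗(H⃗)` and `n ≥ R`. -/
theorem stmt5 {β : Type*} [Fintype β] (H : β → β → Prop)
    (hor : ∀ a b, H a b → ¬ H b a) (hacyclic : RelAcyclic H)
    (h R : ℕ) (hh : h = Fintype.card β) (hR : R = orientationRamsey H)
    (n : ℕ) (hn : R ≤ n)
    (F : Set (Sym2 (Fin n))) (hF : F ⊆ (SimpleGraph.completeGraph (Fin n)).edgeSet)
    (o : Fin n → Fin n → Prop) (ho : IsOrientationOfEdges n F o)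
    (hfew : (copyCount H n o : ℝ) ≤ (n.choose h : ℝ) / (2 * (R.choose h : ℝ))) :
    (n : ℝ) ^ 2 / (2 * (R : ℝ) ^ 2) ≤ (((SimpleGraph.completeGraph (Fin n)).edgeSet \ F).ncard : ℝ) := by
  classical
  rcases Nat.eq_zero_or_pos R with hR0 | hRpos
  · rw [hR0]
    norm_num
  -- R ≥ 1
  have hne : {N : ℕ | Arrows (SimpleGraph.completeGraph (Fin N)) H}.Nonempty := by
    by_contra hc
    rw [Set.not_nonempty_iff_eq_empty] at hc
    rw [hR, orientationRamsey, hc, Nat.sInf_empty] at hRpos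
    exact absurd hRpos (lt_irrefl 0)
  have hArr : Arrows (SimpleGraph.completeGraph (Fin R)) H := by
    have h1 := Nat.sInf_mem hne
    rw [hR, orientationRamsey]
    exact h1
  have hhR : h ≤ R := by
    have hOr : IsOrientation (SimpleGraph.completeGraph (Fin R)) (fun a b => a < b) := by
      constructor
      · intro u v hlt
        simp only [SimpleGraph.completeGraph, SimpleGraph.top_adj]
        exact hlt.ne
      · intro u v huv
        have huv' : u ≠ v := by simpa [SimpleGraph.completeGraph] using huv
        constructor
        · intro h1 h2
          exact absurd h1 (asymm h2)
        · intro h1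
          exact (lt_or_gt_of_ne huv').resolve_right h1
    obtain ⟨f, hf, -⟩ := hArr _ hOr
    have := Fintype.card_le_of_injective f hf
    rw [Fintype.card_fin] at this
    omega
  -- Setup
  have hn1 : 1 ≤ n := le_trans hRpos hn
  set KK := (SimpleGraph.completeGraph (Fin n)).edgeSet with hKK
  have hcfin : {q : Set (Fin n) × Set (Fin n × Fin n) |
    ∃ f : β → Fin n, Function.Injective f ∧ (∀ a b, H a b → o (f a) (f b)) ∧
      q.1 = Set.range f ∧ q.2 = {p | ∃ a b, H a b ∧ p = (f a, f b)}}.Finite := Set.toFinite _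
  have hcc : copyCount H n o = hcfin.toFinset.card := Set.ncard_eq_toFinset_card _ hcfin
  set copies := {q : Set (Fin n) × Set (Fin n × Fin n) |
    ∃ f : β → Fin n, Function.Injective f ∧ (∀ a b, H a b → o (f a) (f b)) ∧
      q.1 = Set.range f ∧ q.2 = {p | ∃ a b, H a b ∧ p = (f a, f b)}} with hcopies
  set Cf := hcfin.toFinset with hCf
  have hMfin : (KK \ F).Finite := Set.toFinite _
  set Mf : Finset (Sym2 (Fin n)) := hMfin.toFinset with hMf
  have hm : (KK \ F).ncard = Mf.card := Set.ncard_eq_toFinset_card _ hMfin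
  set P : Finset (Fin n) → Prop := fun S => ∀ u ∈ S, ∀ v ∈ S, u ≠ v → s(u,v) ∈ F with hP
  set good := (Finset.univ.powersetCard R).filter P with hgood
  -- Step 2: every good set contains a copy
  have hstep2 : ∀ S ∈ good, ∃ q ∈ copies, q.1 ⊆ ↑S := by
    intro S hS
    rw [hgood, Finset.mem_filter, Finset.mem_powersetCard] at hS
    obtain ⟨⟨-, hcard⟩, hPS⟩ := hS
    have hcard' : Fintype.card ↥S = R := by rw [Fintype.card_coe]; exact hcard
    set e : Fin R ≃ ↥S := (Fintype.equivFinOfCardEq hcard').symm with he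
    have hOr : IsOrientation (SimpleGraph.completeGraph (Fin R)) (fun a b => o (e a) (e b)) := by
      constructor
      · intro a b hab
        have h1 : s(((e a) : Fin n), ((e b) : Fin n)) ∈ F := ho.1 _ _ hab
        have h2 := hF h1
        have h3 : ((e a) : Fin n) ≠ ((e b) : Fin n) := by
          simpa [hKK, SimpleGraph.completeGraph, SimpleGraph.mem_edgeSet] using h2
        simp only [SimpleGraph.completeGraph, SimpleGraph.top_adj]
        intro hEq
        exact h3 (by rw [hEq])
      · intro a b hab
        have hab' : a ≠ b := by simpa [SimpleGraph.completeGraph] using hab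
        have h3 : ((e a) : Fin n) ≠ ((e b) : Fin n) := by
          intro hE
          exact hab' (e.injective (Subtype.val_injective hE))
        exact ho.2 _ _ (hPS _ (e a).2 _ (e b).2 h3)
    obtain ⟨f, hfinj, hfarc⟩ := hArr _ hOr
    refine ⟨(Set.range (fun b => ((e (f b)) : Fin n)),
      {p | ∃ a b, H a b ∧ p = (((e (f a)) : Fin n), ((e (f b)) : Fin n))}),
      ⟨fun b => ((e (f b)) : Fin n), ?_, ?_, rfl, rfl⟩, ?_⟩
    · intro a b hE
      exact hfinj (e.injective (Subtype.val_injective hE))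
    · intro a b hab
      exact hfarc a b hab
    · rintro x ⟨b, rfl⟩
      exact (e (f b)).2
  -- every copy has vertex set of size h, as a Finset
  have hq1card : ∀ q ∈ copies, ∃ t : Finset (Fin n), ↑t = q.1 ∧ t.card = h := by
    intro q hq
    obtain ⟨f, hfinj, -, hq1, -⟩ := hq
    refine ⟨Finset.univ.image f, ?_, ?_⟩
    · rw [hq1]
      simp [Set.image_univ]
    · rw [Finset.card_image_of_injective _ hfinj, Finset.card_univ, hh]
  -- choice function
  set φ : Finset (Fin n) → Set (Fin n) × Set (Fin n × Fin n) := fun S =>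
    if hS : ∃ q ∈ copies, q.1 ⊆ ↑S then hS.choose else (∅, ∅) with hφ
  have hφmem : ∀ S ∈ good, φ S ∈ copies ∧ (φ S).1 ⊆ ↑S := by
    intro S hS
    have hex := hstep2 S hS
    rw [hφ]
    simp only
    rw [dif_pos hex]
    exact hex.choose_spec
  -- Step 2': bound good by copies
  have hstep2' : good.card ≤ (n - h).choose (R - h) * Cf.card := by
    have himg : good.image φ ⊆ Cf := by
      intro q hq
      obtain ⟨S, hS, rfl⟩ := Finset.mem_image.1 hq
      rw [hCf, Set.Finite.mem_toFinset]
      exact (hφmem S hS).1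
    calc good.card ≤ (n - h).choose (R - h) * (good.image φ).card := by
          apply Finset.card_le_mul_card_image
          intro q hq
          obtain ⟨S₀, hS₀, rfl⟩ := Finset.mem_image.1 hq
          obtain ⟨t, htc, htcard⟩ := hq1card _ ((hφmem S₀ hS₀).1)
          have h2 := aux_supersets t R
          rw [htcard, Fintype.card_fin] at h2
          refine le_trans (Finset.card_le_card (fun S hS => ?_)) h2
          rw [Finset.mem_filter] at hS
          obtain ⟨hSgood, hfS⟩ := hS
          have h1 := (hφmem S hSgood).2
          rw [hfS] at h1
          rw [Finset.mem_filter]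
          rw [hgood, Finset.mem_filter] at hSgood
          refine ⟨hSgood.1, ?_⟩
          rw [← Finset.coe_subset, htc]
          exact h1
      _ ≤ _ := Nat.mul_le_mul_left _ (Finset.card_le_card himg)
  -- Step 1: most R-sets are good
  have hstep1 : n.choose R ≤ good.card + Mf.card * (n - 2).choose (R - 2) := by
    have hsplit : good.card + ((Finset.univ.powersetCard R).filter (fun S => ¬ P S)).card
        = n.choose R := by
      rw [hgood, Finset.card_filter_add_card_filter_not, Finset.card_powersetCard,
        Finset.card_univ, Fintype.card_fin]
    have hbad : ((Finset.univ.powersetCard R).filter (fun S => ¬ P S)).card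
        ≤ Mf.card * (n - 2).choose (R - 2) := by
      have hsub : (Finset.univ.powersetCard R).filter (fun S => ¬ P S) ⊆
          Mf.biUnion (fun e => (Finset.univ.powersetCard R).filter (fun S => ∀ x ∈ e, x ∈ S)) := by
        intro S hS
        rw [Finset.mem_filter] at hS
        obtain ⟨hSp, hSbad⟩ := hS
        simp only [hP] at hSbad
        push_neg at hSbad
        obtain ⟨u, hu, v, hv, huv, hUV⟩ := hSbad
        rw [Finset.mem_biUnion]
        refine ⟨s(u,v), ?_, ?_⟩
        · rw [hMf, Set.Finite.mem_toFinset]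
          refine ⟨?_, hUV⟩
          rw [hKK, SimpleGraph.mem_edgeSet]
          simpa [SimpleGraph.completeGraph] using huv
        · rw [Finset.mem_filter]
          refine ⟨hSp, fun x hx => ?_⟩
          rcases Sym2.mem_iff.1 hx with rfl | rfl
          exacts [hu, hv]
      refine le_trans (Finset.card_le_card hsub) (le_trans Finset.card_biUnion_le ?_)
      have hbd : ∀ e ∈ Mf, ((Finset.univ.powersetCard R).filter (fun S => ∀ x ∈ e, x ∈ S)).card
          ≤ (n - 2).choose (R - 2) := by
        intro e he
        rw [hMf, Set.Finite.mem_toFinset] at he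
        obtain ⟨heK, -⟩ := he
        revert heK
        induction e using Sym2.ind with
        | _ u v =>
          intro heK
          have huv : u ≠ v := by
            rw [hKK, SimpleGraph.mem_edgeSet] at heK
            simpa [SimpleGraph.completeGraph] using heK
          have h2 := aux_supersets ({u, v} : Finset (Fin n)) R
          rw [Finset.card_pair huv, Fintype.card_fin] at h2
          refine le_trans (Finset.card_le_card (fun S hS => ?_)) h2
          rw [Finset.mem_filter] at hS ⊢
          refine ⟨hS.1, ?_⟩
          intro x hx
          rcases Finset.mem_insert.1 hx with rfl | hx'
          · exact hS.2 x (by simp)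
          · rw [Finset.mem_singleton] at hx'
            subst hx'
            exact hS.2 x (by simp)
      refine le_trans (Finset.sum_le_card_nsmul _ _ _ hbd) ?_
      rw [smul_eq_mul]
    omega
  -- Numeric phase
  have hCRh : (0:ℝ) < (R.choose h : ℝ) := by exact_mod_cast Nat.choose_pos hhR
  have hI1 : n.choose R * R.choose h = n.choose h * (n - h).choose (R - h) :=
    Nat.choose_mul hhR
  rw [hcc] at hfew
  have hkey : (good.card : ℝ) ≤ (n.choose R : ℝ) / 2 := by
    calc (good.card : ℝ) ≤ ((n - h).choose (R - h) : ℝ) * (Cf.card : ℝ) := by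
          exact_mod_cast hstep2'
      _ ≤ ((n - h).choose (R - h) : ℝ) * ((n.choose h : ℝ) / (2 * (R.choose h : ℝ))) :=
          mul_le_mul_of_nonneg_left hfew (by positivity)
      _ = (n.choose R : ℝ) / 2 := by
          have hI1' : (n.choose R : ℝ) * (R.choose h : ℝ)
              = (n.choose h : ℝ) * ((n - h).choose (R - h) : ℝ) := by exact_mod_cast hI1
          field_simp
          nlinarith [hI1']
  by_cases hR1 : R = 1
  · -- R = 1: the hypotheses are contradictory
    exfalso
    have hgood1 : good = Finset.univ.powersetCard R := by
      rw [hgood]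
      apply Finset.filter_true_of_mem
      intro S hS
      rw [Finset.mem_powersetCard] at hS
      intro u hu v hv huv
      exfalso
      apply huv
      have hSc : S.card = 1 := by rw [hS.2, hR1]
      rw [Finset.card_eq_one] at hSc
      obtain ⟨a, rfl⟩ := hSc
      rw [Finset.mem_singleton] at hu hv
      rw [hu, hv]
    have hgcard : good.card = n := by
      rw [hgood1, Finset.card_powersetCard, Finset.card_univ, Fintype.card_fin, hR1,
        Nat.choose_one_right]
    rw [hgcard] at hkey
    have hch : (n.choose R : ℝ) = n := by rw [hR1, Nat.choose_one_right]
    rw [hch] at hkey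
    have hni : (1:ℝ) ≤ n := by exact_mod_cast hn1
    linarith
  · -- R ≥ 2
    have hR2' : 2 ≤ R := by omega
    have hKpos : (0:ℝ) < (n.choose R : ℝ) := by exact_mod_cast Nat.choose_pos hn
    have hhalf : (n.choose R : ℝ) / 2 ≤ (Mf.card : ℝ) * ((n - 2).choose (R - 2) : ℝ) := by
      have h1 : (n.choose R : ℝ) ≤ (good.card : ℝ)
          + (Mf.card : ℝ) * ((n - 2).choose (R - 2) : ℝ) := by exact_mod_cast hstep1
      linarith
    have hC'pos : (0:ℝ) < ((n - 2).choose (R - 2) : ℝ) := by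
      by_contra h'
      push_neg at h'
      have hm0 : (0:ℝ) ≤ (Mf.card : ℝ) := Nat.cast_nonneg _
      have := mul_nonpos_of_nonneg_of_nonpos hm0 h'
      linarith
    have hI2 : n.choose R * R.choose 2 = n.choose 2 * (n - 2).choose (R - 2) :=
      Nat.choose_mul hR2'
    have hI2' : n.choose R * (R * (R - 1)) = n * (n - 1) * ((n - 2).choose (R - 2)) := by
      calc n.choose R * (R * (R - 1)) = n.choose R * (2 * R.choose 2) := by
            rw [aux_two_choose]
        _ = 2 * (n.choose R * R.choose 2) := by ring
        _ = 2 * (n.choose 2 * ((n - 2).choose (R - 2))) := by rw [hI2]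
        _ = (2 * n.choose 2) * ((n - 2).choose (R - 2)) := by ring
        _ = n * (n - 1) * ((n - 2).choose (R - 2)) := by rw [aux_two_choose]
    have hcast1 : ((R - 1 : ℕ) : ℝ) = (R:ℝ) - 1 := by
      rw [Nat.cast_sub hRpos, Nat.cast_one]
    have hcast2 : ((n - 1 : ℕ) : ℝ) = (n:ℝ) - 1 := by
      rw [Nat.cast_sub hn1, Nat.cast_one]
    have hI2R : (n.choose R : ℝ) * ((R:ℝ) * ((R:ℝ) - 1))
        = (n:ℝ) * ((n:ℝ) - 1) * ((n - 2).choose (R - 2) : ℝ) := by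
      rw [← hcast1, ← hcast2]
      exact_mod_cast hI2'
    have hRn : (R:ℝ) ≤ (n:ℝ) := by exact_mod_cast hn
    have hRr : (2:ℝ) ≤ (R:ℝ) := by exact_mod_cast hR2'
    have hnum : (n:ℝ)^2 * ((n - 2).choose (R - 2) : ℝ) ≤ (R:ℝ)^2 * (n.choose R : ℝ) :=
      aux_num hRr hRn hKpos hC'pos hI2R
    rw [hm]
    have hRpos' : (0:ℝ) < (R:ℝ) := by linarith
    rw [div_le_iff₀ (by positivity : (0:ℝ) < 2 * (R:ℝ)^2)]
    exact aux_num2 hRpos' hC'pos (Nat.cast_nonneg _) hhalf hnum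
end

section
/- Let S⃗ be an oriented star and G a graph. Then G → S⃗ if and only if H → S⃗, where H is the (v(S⃗)−1)-core of G. -/
lemma star_card {γ : Type*} [Fintype γ] (S : γ → γ → Prop) (c : γ)
    (hor : ∀ a b, S a b → ¬ S b a)
    (hstar₂ : ∀ a, a ≠ c → S c a ∨ S a c) :
    {a | S c a}.ncard + {a | S a c}.ncard = Fintype.card γ - 1 := by
  classical
  have hdisj : Disjoint {a | S c a} {a | S a c} := by
    rw [Set.disjoint_left]; intro a h1 h2; exact hor _ _ h1 h2
  have hunion : {a | S c a} ∪ {a | S a c} = (↑(({c} : Finset γ)ᶜ) : Set γ) := by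
    ext a
    simp only [Set.mem_union, Finset.coe_compl, Finset.coe_singleton, Set.mem_compl_iff,
      Set.mem_singleton_iff, Set.mem_setOf_eq]
    constructor
    · rintro (h | h) rfl
      · exact hor _ _ h h
      · exact hor _ _ h h
    · exact hstar₂ a
  have h := Set.ncard_union_eq hdisj (Set.toFinite _) (Set.toFinite _)
  rw [hunion, Set.ncard_coe_finset, Finset.card_compl, Finset.card_singleton] at h
  omega

lemma hasCopy_iff {γ : Type*} [Fintype γ] (S : γ → γ → Prop) (c : γ)
    (hor : ∀ a b, S a b → ¬ S b a)
    (hstar₁ : ∀ a b, S a b → a = c ∨ b = c)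
    (hstar₂ : ∀ a, a ≠ c → S c a ∨ S a c)
    {α : Type*} [Finite α] (o : α → α → Prop) (hasym : ∀ u v, o u v → ¬ o v u) :
    HasCopy o S ↔ ∃ x, {a | S c a}.ncard ≤ {y | o x y}.ncard ∧
      {a | S a c}.ncard ≤ {y | o y x}.ncard := by
  classical
  have hcc : ¬ S c c := fun h => hor _ _ h h
  constructor
  · rintro ⟨f, hinj, hf⟩
    refine ⟨f c, ?_, ?_⟩
    · calc {a | S c a}.ncard = (f '' {a | S c a}).ncard :=
            (Set.ncard_image_of_injective _ hinj).symm
        _ ≤ _ := Set.ncard_le_ncard (by rintro y ⟨a, ha, rfl⟩; exact hf _ _ ha)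
              (Set.toFinite _)
    · calc {a | S a c}.ncard = (f '' {a | S a c}).ncard :=
            (Set.ncard_image_of_injective _ hinj).symm
        _ ≤ _ := Set.ncard_le_ncard (by rintro y ⟨a, ha, rfl⟩; exact hf _ _ ha)
              (Set.toFinite _)
  · rintro ⟨x, hp, hq⟩
    have _inst := Fintype.ofFinite α
    have h1 : Nonempty (↥{a | S c a} ↪ ↥{y | o x y}) := by
      apply Function.Embedding.nonempty_of_card_le
      rw [← Nat.card_eq_fintype_card, ← Nat.card_eq_fintype_card,
        Nat.card_coe_set_eq, Nat.card_coe_set_eq]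
      exact hp
    have h2 : Nonempty (↥{a | S a c} ↪ ↥{y | o y x}) := by
      apply Function.Embedding.nonempty_of_card_le
      rw [← Nat.card_eq_fintype_card, ← Nat.card_eq_fintype_card,
        Nat.card_coe_set_eq, Nat.card_coe_set_eq]
      exact hq
    obtain ⟨e₁⟩ := h1
    obtain ⟨e₂⟩ := h2
    have he₁ : ∀ u, o x ↑(e₁ u) := fun u => (e₁ u).2
    have he₂ : ∀ u, o ↑(e₂ u) x := fun u => (e₂ u).2
    have hxx : ¬ o x x := fun h => hasym _ _ h h
    refine ⟨fun a => if h : S c a then ↑(e₁ ⟨a, h⟩) else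
      if h' : S a c then ↑(e₂ ⟨a, h'⟩) else x, ?_, ?_⟩
    · intro a b hab
      beta_reduce at hab
      by_cases ha : S c a <;> by_cases hb : S c b
      · rw [dif_pos ha, dif_pos hb] at hab
        have := e₁.injective (Subtype.coe_injective hab)
        exact congrArg Subtype.val this
      · rw [dif_pos ha, dif_neg hb] at hab
        by_cases hb' : S b c
        · rw [dif_pos hb'] at hab
          exact absurd (he₂ ⟨b, hb'⟩) (by rw [← hab]; exact fun h => hasym _ _ (he₁ _) h)
        · rw [dif_neg hb'] at hab
          exact absurd (he₁ ⟨a, ha⟩) (by rw [hab]; exact hxx)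
      · rw [dif_neg ha, dif_pos hb] at hab
        by_cases ha' : S a c
        · rw [dif_pos ha'] at hab
          exact absurd (he₂ ⟨a, ha'⟩) (by rw [hab]; exact fun h => hasym _ _ (he₁ _) h)
        · rw [dif_neg ha'] at hab
          exact absurd (he₁ ⟨b, hb⟩) (by rw [← hab]; exact hxx)
      · rw [dif_neg ha, dif_neg hb] at hab
        by_cases ha' : S a c <;> by_cases hb' : S b c
        · rw [dif_pos ha', dif_pos hb'] at hab
          have := e₂.injective (Subtype.coe_injective hab)
          exact congrArg Subtype.val this
        · rw [dif_pos ha', dif_neg hb'] at hab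
          exact absurd (he₂ ⟨a, ha'⟩) (by rw [hab]; exact hxx)
        · rw [dif_neg ha', dif_pos hb'] at hab
          exact absurd (he₂ ⟨b, hb'⟩) (by rw [← hab]; exact hxx)
        · have hac : a = c := by
            by_contra hne; rcases hstar₂ a hne with h | h
            exacts [ha h, ha' h]
          have hbc : b = c := by
            by_contra hne; rcases hstar₂ b hne with h | h
            exacts [hb h, hb' h]
          rw [hac, hbc]
    · intro a b hab
      beta_reduce
      rcases hstar₁ _ _ hab with rfl | rfl
      · rw [dif_neg hcc, dif_neg hcc, dif_pos hab]
        exact he₁ ⟨b, hab⟩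
      · have hnca : ¬ S b a := hor _ _ hab
        rw [dif_neg hnca, dif_pos hab, dif_neg hcc, dif_neg hcc]
        exact he₂ ⟨a, hab⟩

lemma core_induced {V : Type*} [Fintype V] (G : SimpleGraph V) (m : ℕ) (H : G.Subgraph)
    (hcore : ∀ v ∈ H.verts, m ≤ (H.neighborSet v).ncard)
    (hmax : ∀ H' : G.Subgraph,
      (∀ v ∈ H'.verts, m ≤ (H'.neighborSet v).ncard) → H' ≤ H) :
    ∀ u v, u ∈ H.verts → v ∈ H.verts → G.Adj u v → H.Adj u v := by
  intro u v hu hv huv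
  let H' : G.Subgraph :=
    { verts := H.verts
      Adj := fun a b => a ∈ H.verts ∧ b ∈ H.verts ∧ G.Adj a b
      adj_sub := fun h => h.2.2
      edge_vert := fun h => h.1
      symm := ⟨fun a b h => ⟨h.2.1, h.1, h.2.2.symm⟩⟩ }
  have hle := hmax H' (fun w hw => le_trans (hcore w hw)
    (Set.ncard_le_ncard (fun z hz => ⟨hw, H.edge_vert hz.symm, H.adj_sub hz⟩)
      (Set.toFinite _)))
  exact hle.2 ⟨hu, hv, huv⟩

lemma peel {V : Type*} [Fintype V] (G : SimpleGraph V) (m : ℕ) (H : G.Subgraph)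
    (hcore : ∀ v ∈ H.verts, m ≤ (H.neighborSet v).ncard)
    (hmax : ∀ H' : G.Subgraph,
      (∀ v ∈ H'.verts, m ≤ (H'.neighborSet v).ncard) → H' ≤ H) :
    ∀ T : Set V, T ∩ H.verts = ∅ → T.Nonempty →
      ∃ u ∈ T, ({y | G.Adj u y} ∩ ((T \ {u}) ∪ H.verts)).ncard < m := by
  rintro T hdisj ⟨u₀, hu₀⟩
  by_contra hcon
  push_neg at hcon
  let H' : G.Subgraph :=
    { verts := T ∪ H.verts
      Adj := fun a b => (a ∈ T ∪ H.verts) ∧ (b ∈ T ∪ H.verts) ∧ G.Adj a b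
      adj_sub := fun h => h.2.2
      edge_vert := fun h => h.1
      symm := ⟨fun a b h => ⟨h.2.1, h.1, h.2.2.symm⟩⟩ }
  have hdeg : ∀ v ∈ H'.verts, m ≤ (H'.neighborSet v).ncard := by
    rintro v (hv | hv)
    · refine le_trans (hcon v hv) (Set.ncard_le_ncard ?_ (Set.toFinite _))
      rintro y ⟨hadj, hy⟩
      refine ⟨Or.inl hv, ?_, hadj⟩
      rcases hy with ⟨hy, _⟩ | hy
      exacts [Or.inl hy, Or.inr hy]
    · refine le_trans (hcore v hv) (Set.ncard_le_ncard ?_ (Set.toFinite _))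
      intro y hy
      exact ⟨Or.inr hv, Or.inr (H.edge_vert hy.symm), H.adj_sub hy⟩
  have hle := hmax H' hdeg
  have hmem : u₀ ∈ T ∩ H.verts := ⟨hu₀, hle.1 (Or.inl hu₀)⟩
  rw [hdisj] at hmem
  exact hmem

lemma main_ind {V : Type*} [Fintype V] {γ : Type*} [Fintype γ] (G : SimpleGraph V)
    (S : γ → γ → Prop) (c : γ)
    (hor : ∀ a b, S a b → ¬ S b a)
    (hstar₂ : ∀ a, a ≠ c → S c a ∨ S a c)
    (H : G.Subgraph)
    (hcore : ∀ v ∈ H.verts, Fintype.card γ - 1 ≤ (H.neighborSet v).ncard)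
    (hmax : ∀ H' : G.Subgraph,
      (∀ v ∈ H'.verts, Fintype.card γ - 1 ≤ (H'.neighborSet v).ncard) → H' ≤ H)
    (o₀ : ↥H.verts → ↥H.verts → Prop)
    (ho₀ : IsOrientation H.coe o₀)
    (hblock : ∀ x : ↥H.verts, {b | o₀ x b}.ncard < {a | S c a}.ncard ∨
       {b | o₀ b x}.ncard < {a | S a c}.ncard) :
    ∀ (n : ℕ) (T : Finset V), T.card = n → ((↑T : Set V) ∩ H.verts = ∅) →
      ∃ (μ : V → Bool) (o : V → V → Prop),
        (∀ x y, o x y → G.Adj x y ∧ x ∈ (↑T ∪ H.verts : Set V) ∧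
          y ∈ (↑T ∪ H.verts : Set V)) ∧
        (∀ x y, x ∈ (↑T ∪ H.verts : Set V) → y ∈ (↑T ∪ H.verts : Set V) → G.Adj x y →
           (o x y ↔ ¬ o y x)) ∧
        (∀ x ∈ (↑T ∪ H.verts : Set V),
           (μ x = true → {y | o x y}.ncard < {a | S c a}.ncard) ∧
           (μ x = false → {y | o y x}.ncard < {a | S a c}.ncard)) := by
  classical
  intro n
  induction n with
  | zero =>
    intro T hT hdisj
    have hTe : T = ∅ := Finset.card_eq_zero.mp hT
    subst hTe
    refine ⟨fun x => if hx : x ∈ H.verts then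
        decide ({b | o₀ ⟨x, hx⟩ b}.ncard < {a | S c a}.ncard) else true,
      fun x y => ∃ (hx : x ∈ H.verts) (hy : y ∈ H.verts), o₀ ⟨x, hx⟩ ⟨y, hy⟩, ?_, ?_, ?_⟩
    · rintro x y ⟨hx, hy, h⟩
      have hadj : H.Adj x y := ho₀.1 _ _ h
      exact ⟨H.adj_sub hadj, Set.mem_union_right _ hx, Set.mem_union_right _ hy⟩
    · intro x y hx hy hadj
      beta_reduce
      simp only [Finset.coe_empty, Set.empty_union] at hx hy
      have hH : H.Adj x y := core_induced G _ H hcore hmax x y hx hy hadj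
      have hco : H.coe.Adj ⟨x, hx⟩ ⟨y, hy⟩ := hH
      constructor
      · rintro ⟨hx1, hy1, h⟩ ⟨hy2, hx2, h'⟩
        exact (ho₀.2 _ _ hco).mp h h'
      · intro hno
        exact ⟨hx, hy, (ho₀.2 _ _ hco).mpr (fun h' => hno ⟨hy, hx, h'⟩)⟩
    · intro x hx
      beta_reduce
      simp only [Finset.coe_empty, Set.empty_union] at hx
      have hset1 : {y | ∃ (hx' : x ∈ H.verts) (hy : y ∈ H.verts), o₀ ⟨x, hx'⟩ ⟨y, hy⟩}
          = Subtype.val '' {b | o₀ ⟨x, hx⟩ b} := by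
        ext y
        constructor
        · rintro ⟨hx', hy, h⟩; exact ⟨⟨y, hy⟩, h, rfl⟩
        · rintro ⟨b, hb, rfl⟩; exact ⟨hx, b.2, hb⟩
      have hset2 : {y | ∃ (hy : y ∈ H.verts) (hx' : x ∈ H.verts), o₀ ⟨y, hy⟩ ⟨x, hx'⟩}
          = Subtype.val '' {b | o₀ b ⟨x, hx⟩} := by
        ext y
        constructor
        · rintro ⟨hy, hx', h⟩; exact ⟨⟨y, hy⟩, h, rfl⟩
        · rintro ⟨b, hb, rfl⟩; exact ⟨b.2, hx, hb⟩
      constructor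
      · intro hμ
        rw [dif_pos hx, decide_eq_true_eq] at hμ
        rw [hset1, Set.ncard_image_of_injective _ Subtype.coe_injective]
        exact hμ
      · intro hμ
        rw [dif_pos hx] at hμ
        have hnp := of_decide_eq_false hμ
        rw [hset2, Set.ncard_image_of_injective _ Subtype.coe_injective]
        rcases hblock ⟨x, hx⟩ with h | h
        · exact absurd h hnp
        · exact h
  | succ n ih =>
    intro T hT hdisj
    have hne : (↑T : Set V).Nonempty := by
      rw [Finset.coe_nonempty]
      exact Finset.card_pos.mp (by omega)
    obtain ⟨u, huT, hu⟩ := peel G (Fintype.card γ - 1) H hcore hmax ↑T hdisj hne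
    have huT' : u ∈ T := Finset.mem_coe.mp huT
    have huH : u ∉ H.verts := by
      intro h
      have hmem : u ∈ (↑T ∩ H.verts : Set V) := ⟨huT, h⟩
      rw [hdisj] at hmem
      exact hmem
    have hTcard : (T.erase u).card = n := by
      rw [Finset.card_erase_of_mem huT']; omega
    have hdisj' : ((↑(T.erase u) : Set V) ∩ H.verts) = ∅ := by
      apply Set.eq_empty_of_subset_empty
      rw [← hdisj]
      intro z hz
      exact ⟨Finset.mem_coe.mpr (Finset.mem_of_mem_erase (Finset.mem_coe.mp hz.1)), hz.2⟩
    obtain ⟨μ, o, h1, h2, h4⟩ := ih (T.erase u) hTcard hdisj'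
    set U' : Set V := ↑(T.erase u) ∪ H.verts with hU'
    set N : Set V := {y | G.Adj u y} ∩ U' with hNdef
    have huU' : u ∉ U' := by
      rintro (h | h)
      · exact (Finset.notMem_erase u T) (Finset.mem_coe.mp h)
      · exact huH h
    have hUins : (↑T ∪ H.verts : Set V) = insert u U' := by
      rw [hU']
      conv_lhs => rw [← Finset.insert_erase huT']
      rw [Finset.coe_insert, Set.insert_union]
    have hNcard : N.ncard < {a | S c a}.ncard + {a | S a c}.ncard := by
      rw [star_card S c hor hstar₂, hNdef, hU', Finset.coe_erase]
      exact hu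
    set A : Set V := N ∩ {y | μ y = true} with hA
    have hAsub : A ⊆ N := Set.inter_subset_left
    have hsplit := Set.ncard_diff_add_ncard_of_subset hAsub (Set.toFinite N)
    have hkey : A.ncard < {a | S c a}.ncard ∨ (N \ A).ncard < {a | S a c}.ncard := by
      omega
    have hou1 : ∀ z, ¬ o u z := fun z h => huU' (h1 _ _ h).2.1
    have hou2 : ∀ z, ¬ o z u := fun z h => huU' (h1 _ _ h).2.2
    have huN : u ∉ N := fun h => huU' h.2
    refine ⟨Function.update μ u (decide (A.ncard < {a | S c a}.ncard)),
      fun x y => o x y ∨ (x = u ∧ y ∈ N ∧ μ y = true) ∨ (y = u ∧ x ∈ N ∧ ¬ μ x = true),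
      ?_, ?_, ?_⟩
    · rintro x y (h | ⟨rfl, hyN, -⟩ | ⟨rfl, hxN, -⟩)
      · obtain ⟨ha, hx, hy⟩ := h1 x y h
        rw [hUins]
        exact ⟨ha, Set.mem_insert_of_mem _ hx, Set.mem_insert_of_mem _ hy⟩
      · rw [hUins]
        exact ⟨hyN.1, Set.mem_insert _ _, Set.mem_insert_of_mem _ hyN.2⟩
      · rw [hUins]
        exact ⟨(hxN.1).symm, Set.mem_insert_of_mem _ hxN.2, Set.mem_insert _ _⟩
    · intro x y hx hy hadj
      beta_reduce
      rw [hUins] at hx hy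
      rcases Set.mem_insert_iff.mp hx with rfl | hx' <;>
        rcases Set.mem_insert_iff.mp hy with rfl | hy'
      · exact absurd rfl hadj.ne
      · -- x = u, y ∈ U'
        have hyN : y ∈ N := ⟨hadj, hy'⟩
        have hyu : y ≠ x := fun h => huU' (h ▸ hy')
        constructor
        · rintro (h | ⟨-, -, hμ⟩ | ⟨h, -, -⟩)
          · exact absurd h (hou1 y)
          · rintro (h' | ⟨hequ, -, -⟩ | ⟨-, -, hμ'⟩)
            · exact hou2 y h'
            · exact hyu hequ
            · exact hμ' hμ
          · exact absurd h hyu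
        · intro hno
          by_cases hμ : μ y = true
          · exact Or.inr (Or.inl ⟨rfl, hyN, hμ⟩)
          · exact absurd (Or.inr (Or.inr ⟨rfl, hyN, hμ⟩)) hno
      · -- y = u, x ∈ U'
        have hxN : x ∈ N := ⟨hadj.symm, hx'⟩
        have hxu : x ≠ y := fun h => huU' (h ▸ hx')
        constructor
        · rintro (h | ⟨hequ, -, -⟩ | ⟨-, -, hμ⟩)
          · exact absurd h (hou2 x)
          · exact absurd hequ hxu
          · rintro (h' | ⟨-, -, hμ'⟩ | ⟨hequ, -, -⟩)
            · exact hou1 x h'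
            · exact hμ hμ'
            · exact hxu hequ
        · intro hno
          by_cases hμ : μ x = true
          · exact absurd (Or.inr (Or.inl ⟨rfl, hxN, hμ⟩)) hno
          · exact Or.inr (Or.inr ⟨rfl, hxN, hμ⟩)
      · -- both in U'
        have hxu : x ≠ u := fun h => huU' (h ▸ hx')
        have hyu : y ≠ u := fun h => huU' (h ▸ hy')
        have hiff := h2 x y hx' hy' hadj
        constructor
        · rintro (h | ⟨hequ, -, -⟩ | ⟨hequ, -, -⟩)
          · rintro (h' | ⟨hequ, -, -⟩ | ⟨hequ, -, -⟩)
            · exact (hiff.mp h) h'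
            · exact hyu hequ
            · exact hxu hequ
          · exact absurd hequ hxu
          · exact absurd hequ hyu
        · intro hno
          exact Or.inl (hiff.mpr (fun h' => hno (Or.inl h')))
    · intro x hx
      beta_reduce
      rw [hUins] at hx
      rcases Set.mem_insert_iff.mp hx with rfl | hx'
      · rw [Function.update_self]
        have houtset : {y | o x y ∨ (x = x ∧ y ∈ N ∧ μ y = true) ∨
            (y = x ∧ x ∈ N ∧ ¬ μ x = true)} = A := by
          ext y
          constructor
          · rintro (h | ⟨-, hyN, hμ⟩ | ⟨hequ, hN', -⟩)
            · exact absurd h (hou1 y)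
            · exact ⟨hyN, hμ⟩
            · exact absurd hN' huN
          · rintro ⟨hyN, hμ⟩
            exact Or.inr (Or.inl ⟨rfl, hyN, hμ⟩)
        have hinset : {y | o y x ∨ (y = x ∧ x ∈ N ∧ μ x = true) ∨
            (x = x ∧ y ∈ N ∧ ¬ μ y = true)} = N \ A := by
          ext y
          constructor
          · rintro (h | ⟨hequ, hN', -⟩ | ⟨-, hyN, hμ⟩)
            · exact absurd h (hou2 y)
            · exact absurd hN' huN
            · exact ⟨hyN, fun hA' => hμ hA'.2⟩
          · rintro ⟨hyN, hyA⟩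
            exact Or.inr (Or.inr ⟨rfl, hyN, fun hμ => hyA ⟨hyN, hμ⟩⟩)
        constructor
        · intro hb
          rw [houtset]
          exact of_decide_eq_true hb
        · intro hb
          rw [hinset]
          rcases hkey with h | h
          · exact absurd h (of_decide_eq_false hb)
          · exact h
      · have hxu : x ≠ u := fun h => huU' (h ▸ hx')
        rw [Function.update_of_ne hxu]
        obtain ⟨hA1, hB1⟩ := h4 x hx'
        constructor
        · intro hμ
          have hset : {y | o x y ∨ (x = u ∧ y ∈ N ∧ μ y = true) ∨
              (y = u ∧ x ∈ N ∧ ¬ μ x = true)} = {y | o x y} := by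
            ext y
            constructor
            · rintro (h | ⟨hequ, -, -⟩ | ⟨-, -, hμ'⟩)
              · exact h
              · exact absurd hequ hxu
              · exact absurd hμ hμ'
            · exact fun h => Or.inl h
          rw [hset]
          exact hA1 hμ
        · intro hμ
          have hset : {y | o y x ∨ (y = u ∧ x ∈ N ∧ μ x = true) ∨
              (x = u ∧ y ∈ N ∧ ¬ μ y = true)} = {y | o y x} := by
            ext y
            constructor
            · rintro (h | ⟨-, -, hμ'⟩ | ⟨hequ, -, -⟩)
              · exact h
              · simp [hμ] at hμ'
              · exact absurd hequ hxu
            · exact fun h => Or.inl h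
          rw [hset]
          exact hB1 hμ

/-- For an oriented star `S⃗` (with centre `c`) and a graph `G`, we have `G → S⃗`
if and only if `H → S⃗`, where `H` is the `(v(S⃗)-1)`-core of `G`. -/
theorem stmt10 {V : Type*} [Fintype V] (G : SimpleGraph V)
    {γ : Type*} [Fintype γ] (S : γ → γ → Prop)
    (hor : ∀ a b, S a b → ¬ S b a) (c : γ)
    (hstar₁ : ∀ a b, S a b → a = c ∨ b = c)
    (hstar₂ : ∀ a, a ≠ c → S c a ∨ S a c)
    (H : G.Subgraph)
    (hcore : ∀ v ∈ H.verts, Fintype.card γ - 1 ≤ (H.neighborSet v).ncard)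
    (hmax : ∀ H' : G.Subgraph,
      (∀ v ∈ H'.verts, Fintype.card γ - 1 ≤ (H'.neighborSet v).ncard) → H' ≤ H) :
    Arrows G S ↔ Arrows H.coe S := by
  classical
  constructor
  · -- hard direction
    intro hG o₀ ho₀
    by_contra hnc
    have hasym₀ : ∀ u v, o₀ u v → ¬ o₀ v u := fun u v h => (ho₀.2 u v (ho₀.1 u v h)).mp h
    rw [hasCopy_iff S c hor hstar₁ hstar₂ o₀ hasym₀] at hnc
    push_neg at hnc
    have hblock : ∀ x : ↥H.verts, {b | o₀ x b}.ncard < {a | S c a}.ncard ∨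
        {b | o₀ b x}.ncard < {a | S a c}.ncard := by
      intro x
      rcases lt_or_ge ({b | o₀ x b}.ncard) ({a | S c a}.ncard) with h | h
      · exact Or.inl h
      · exact Or.inr (hnc x h)
    set T : Finset V := (Set.toFinite (H.vertsᶜ)).toFinset with hT
    have hTcoe : (↑T : Set V) = H.vertsᶜ := Set.Finite.coe_toFinset _
    have hdisj : (↑T : Set V) ∩ H.verts = ∅ := by
      rw [hTcoe, Set.compl_inter_self]
    obtain ⟨μ, o, h1, h2, h4⟩ :=
      main_ind G S c hor hstar₂ H hcore hmax o₀ ho₀ hblock T.card T rfl hdisj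
    have hUniv : (↑T ∪ H.verts : Set V) = Set.univ := by
      rw [hTcoe, Set.compl_union_self]
    have hornt : IsOrientation G o := by
      constructor
      · exact fun u v h => (h1 u v h).1
      · intro u v hadj
        exact h2 u v (by rw [hUniv]; trivial) (by rw [hUniv]; trivial) hadj
    have hasym : ∀ u v, o u v → ¬ o v u := fun u v h => (hornt.2 u v (hornt.1 u v h)).mp h
    have hcopy := hG o hornt
    rw [hasCopy_iff S c hor hstar₁ hstar₂ o hasym] at hcopy
    obtain ⟨x, hxp, hxq⟩ := hcopy
    obtain ⟨hA1, hB1⟩ := h4 x (by rw [hUniv]; trivial)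
    cases hμx : μ x with
    | true => have := hA1 hμx; omega
    | false => have := hB1 hμx; omega
  · -- easy direction
    intro hH o ho
    have ho₁ : IsOrientation H.coe (fun a b => H.Adj ↑a ↑b ∧ o ↑a ↑b) := by
      constructor
      · intro a b h
        exact h.1
      · intro a b hab
        have hGad : G.Adj ↑a ↑b := H.adj_sub hab
        have hiff := ho.2 _ _ hGad
        constructor
        · rintro ⟨h1', h2'⟩ ⟨h3', h4'⟩
          exact (hiff.mp h2') h4'
        · intro hno
          exact ⟨hab, hiff.mpr (fun h' => hno ⟨hab.symm, h'⟩)⟩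
    obtain ⟨f, hfinj, hfarc⟩ := hH _ ho₁
    exact ⟨fun a => ↑(f a), fun a b h => hfinj (Subtype.coe_injective h),
      fun a b h => (hfarc a b h).2⟩
end

section
/- Let F⃗ be an oriented graph (with at least one vertex) whose maximum 2-density satisfies m₂(F⃗) ≤ 2, and let TT⃗₃′ be the transitive tournament on 3 vertices with an arbitrary choice of root. Then the rooted product satisfies m₂(F⃗∘TT⃗₃′) = 2. -/
/-- The 2-density associated to a (sub)graph with `v` vertices and `e` edges:
`(e-1)/(v-2)` if `v ≥ 3`, `1/2` for a single edge, and `0` otherwise. -/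
noncomputable def d2 (v e : ℕ) : ℝ :=
  if 3 ≤ v then (e - 1 : ℝ) / (v - 2 : ℝ) else if e = 1 then 1 / 2 else 0

/-- The maximum 2-density `m₂(H)` of a finite simple graph `H`. -/
noncomputable def m2 {α : Type*} [Fintype α] (H : SimpleGraph α) : ℝ :=
  sSup {x : ℝ | ∃ J : H.Subgraph, x = d2 J.verts.ncard J.edgeSet.ncard}

/-- The maximum 2-density of an oriented graph: that of its underlying graph. -/
noncomputable def m2Rel {β : Type*} [Fintype β] (H : β → β → Prop) : ℝ :=
  m2 (SimpleGraph.fromRel H)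
/-- The rooted product `F⃗ ∘ H⃗` of an oriented graph `F` with an oriented graph `H`
rooted at `r`. -/
def rootedProd {β γ : Type*} (F : β → β → Prop) (H : γ → γ → Prop) (r : γ) :
    β × γ → β × γ → Prop :=
  fun x y => (x.2 = r ∧ y.2 = r ∧ F x.1 y.1) ∨ (x.1 = y.1 ∧ H x.2 y.2)

/-- The transitive tournament on 3 vertices. -/
def TT3 : Fin 3 → Fin 3 → Prop := fun a b => a < b

section AuxLemmas

lemma d2_le_two {v e : ℕ} (h : 3 ≤ v → e + 3 ≤ 2 * v) : d2 v e ≤ 2 := by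
  unfold d2
  split_ifs with h1 h2
  · have hv : (3:ℝ) ≤ (v:ℝ) := by exact_mod_cast h1
    have he : (e:ℝ) + 3 ≤ 2 * v := by exact_mod_cast h h1
    rw [div_le_iff₀ (by linarith)]
    linarith
  · norm_num
  · norm_num

lemma d2_le_two_rev {v e : ℕ} (hv : 3 ≤ v) (h : d2 v e ≤ 2) : e + 3 ≤ 2 * v := by
  unfold d2 at h
  rw [if_pos hv] at h
  have hv' : (3:ℝ) ≤ (v:ℝ) := by exact_mod_cast hv
  rw [div_le_iff₀ (by linarith)] at h
  have : (e:ℝ) + 3 ≤ 2 * v := by linarith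
  exact_mod_cast this

lemma d2_three_three : d2 3 3 = 2 := by norm_num [d2]

lemma edgeSet_ncard_le_choose' {α : Type*} [Fintype α] {G : SimpleGraph α} (K : G.Subgraph) :
    K.edgeSet.ncard ≤ K.verts.ncard.choose 2 := by
  classical
  haveI : Fintype K.verts := K.verts.toFinite.fintype
  have h1 : K.edgeSet = Sym2.map (↑) '' K.coe.edgeSet := (K.image_coe_edgeSet_coe).symm
  rw [h1, Set.ncard_image_of_injective _ (Sym2.map.injective Subtype.coe_injective)]
  have h2 : K.coe.edgeSet.ncard = K.coe.edgeFinset.card := by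
    rw [← SimpleGraph.coe_edgeFinset, Set.ncard_coe_finset]
  have h3 : K.verts.ncard = Fintype.card K.verts := by
    rw [← Nat.card_coe_set_eq, Nat.card_eq_fintype_card]
  rw [h2, h3]
  exact SimpleGraph.card_edgeFinset_le_card_choose_two

lemma m2_set_finite {α : Type*} [Fintype α] (H : SimpleGraph α) :
    {x : ℝ | ∃ J : H.Subgraph, x = d2 J.verts.ncard J.edgeSet.ncard}.Finite := by
  classical
  set n := Fintype.card α with hn
  apply Set.Finite.subset (Set.Finite.image (fun p : ℕ × ℕ => d2 p.1 p.2)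
    ((Set.finite_Iic n).prod (Set.finite_Iic (n.choose 2))))
  rintro x ⟨J, rfl⟩
  have hverts : J.verts.ncard ≤ n := by
    have := Set.ncard_le_ncard (Set.subset_univ J.verts) Set.finite_univ
    simpa [Set.ncard_univ, Nat.card_eq_fintype_card] using this
  refine ⟨(J.verts.ncard, J.edgeSet.ncard), ⟨hverts, ?_⟩, rfl⟩
  exact le_trans (edgeSet_ncard_le_choose' J) (Nat.choose_le_choose 2 hverts)

lemma copy1' {e v r' : ℕ} (h1 : e ≤ v.choose 2) (h2 : v ≤ 3) (h3 : r' ≤ 1) (h4 : r' ≤ v) :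
    e + 2*r' + min (v - r') 1 ≤ 2*v := by
  interval_cases v <;> simp [Nat.choose] at h1 ⊢ <;> omega

lemma copy3' {e v : ℕ} (h1 : e ≤ v.choose 2) (h2 : v ≤ 2) : 2*e ≤ v := by
  interval_cases v <;> simp [Nat.choose] at h1 ⊢ <;> omega

lemma fiber_ncard {β : Type*} (b : β) : ({x : β × Fin 3 | x.1 = b}).ncard = 3 := by
  have : {x : β × Fin 3 | x.1 = b} = Prod.mk b '' Set.univ := by
    ext ⟨x1, x2⟩
    simp only [Set.mem_setOf_eq, Set.image_univ, Set.mem_range, Prod.mk.injEq]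
    constructor
    · rintro rfl; exact ⟨x2, rfl, rfl⟩
    · rintro ⟨y, rfl, rfl⟩; rfl
  rw [this, Set.ncard_image_of_injective _ (Prod.mk_right_injective b), Set.ncard_univ,
    Nat.card_eq_fintype_card, Fintype.card_fin]

lemma topFin3 : ((⊤ : SimpleGraph (Fin 3)).edgeSet).ncard = 3 := by
  rw [SimpleGraph.edgeSet_top, ← Nat.card_coe_set_eq, Nat.card_eq_fintype_card]
  have h := Sym2.card_subtype_not_diag (α := Fin 3)
  simp only [Fintype.card_fin] at h
  convert h using 2
  · rfl
  · rfl


lemma main_count {β : Type*} [Fintype β] (F : β → β → Prop) (r : Fin 3)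
    (hF : ∀ K : (SimpleGraph.fromRel F).Subgraph, 3 ≤ K.verts.ncard →
      K.edgeSet.ncard + 3 ≤ 2 * K.verts.ncard)
    (J : (SimpleGraph.fromRel (rootedProd F TT3 r)).Subgraph)
    (hv : 3 ≤ J.verts.ncard) :
    J.edgeSet.ncard + 3 ≤ 2 * J.verts.ncard := by
  classical
  -- the local subgraph in copy b
  let Jb : β → (SimpleGraph.fromRel (rootedProd F TT3 r)).Subgraph := fun b =>
    { verts := J.verts ∩ {x | x.1 = b}
      Adj := fun x y => J.Adj x y ∧ x.1 = b ∧ y.1 = b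
      adj_sub := fun h => J.adj_sub h.1
      edge_vert := fun h => ⟨J.edge_vert h.1, h.2.1⟩
      symm := ⟨fun x y h => ⟨J.adj_symm h.1, h.2.2, h.2.1⟩⟩ }
  -- the root subgraph
  have Kadj : ∀ a b : β, J.Adj (a,r) (b,r) → (SimpleGraph.fromRel F).Adj a b := by
    intro a b h
    have h2 := J.adj_sub h
    rw [SimpleGraph.fromRel_adj] at h2
    obtain ⟨hne, h2⟩ := h2
    have hne' : a ≠ b := fun hab => hne (by simp [hab])
    rw [SimpleGraph.fromRel_adj]
    refine ⟨hne', ?_⟩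
    rcases h2 with (h2 | h2) <;> rcases h2 with (⟨_, _, hf⟩ | ⟨h1, h2⟩)
    · exact Or.inl hf
    · exact absurd h2 (lt_irrefl r)
    · exact Or.inr hf
    · exact absurd h2 (lt_irrefl r)
  let K : (SimpleGraph.fromRel F).Subgraph :=
    { verts := {a | (a, r) ∈ J.verts}
      Adj := fun a b => J.Adj (a,r) (b,r)
      adj_sub := fun {a b} h => Kadj a b h
      edge_vert := fun h => J.edge_vert h
      symm := ⟨fun a b h => J.adj_symm h⟩ }
  -- finsets
  let Vf : Finset (β × Fin 3) := J.verts.toFinite.toFinset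
  let Ef : Finset (Sym2 (β × Fin 3)) := J.edgeSet.toFinite.toFinset
  have hVf : Vf.card = J.verts.ncard := (Set.ncard_eq_toFinset_card _ _).symm
  have hEf : Ef.card = J.edgeSet.ncard := (Set.ncard_eq_toFinset_card _ _).symm
  -- local/root split of edges
  let Lp : Sym2 (β × Fin 3) → Prop := fun e => ∀ x ∈ e, ∀ y ∈ e, x.1 = y.1
  let Eloc := Ef.filter (fun e => Lp e)
  let Erot := Ef.filter (fun e => ¬ Lp e)
  have hsplit : Eloc.card + Erot.card = Ef.card :=
    Finset.card_filter_add_card_filter_not _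
  -- root edges inject into K.edgeSet
  have hErot : Erot.card ≤ K.edgeSet.ncard := by
    have hsub : ↑Erot ⊆ Sym2.map (fun a => (a, r)) '' K.edgeSet := by
      intro e he
      simp only [Erot, Finset.coe_filter, Set.mem_setOf_eq, Finset.mem_coe,
        Set.Finite.mem_toFinset, Ef] at he
      obtain ⟨he, hnl⟩ := he
      induction e using Sym2.ind with
      | _ x y =>
        rw [SimpleGraph.Subgraph.mem_edgeSet] at he
        have h2 := J.adj_sub he
        rw [SimpleGraph.fromRel_adj] at h2
        obtain ⟨hne, h2⟩ := h2
        have hroot : x.2 = r ∧ y.2 = r := by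
          rcases h2 with (h2 | h2) <;> rcases h2 with (⟨ha, hb, _⟩ | ⟨h1, _⟩)
          · exact ⟨ha, hb⟩
          · exfalso; apply hnl; intro u hu w hw
            rw [Sym2.mem_iff] at hu hw
            rcases hu with (rfl | rfl) <;> rcases hw with (rfl | rfl) <;> simp [h1]
          · exact ⟨hb, ha⟩
          · exfalso; apply hnl; intro u hu w hw
            rw [Sym2.mem_iff] at hu hw
            rcases hu with (rfl | rfl) <;> rcases hw with (rfl | rfl) <;> simp [h1]
        have hx : x = (x.1, r) := by rw [← hroot.1]
        have hy : y = (y.1, r) := by rw [← hroot.2]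
        refine ⟨s(x.1, y.1), ?_, ?_⟩
        · rw [SimpleGraph.Subgraph.mem_edgeSet]
          show J.Adj (x.1, r) (y.1, r)
          rw [← hx, ← hy]; exact he
        · rw [Sym2.map_pair_eq, ← hx, ← hy]
      
    calc Erot.card = (↑Erot : Set (Sym2 (β × Fin 3))).ncard := by
          rw [Set.ncard_coe_finset]
      _ ≤ (Sym2.map (fun a => (a, r)) '' K.edgeSet).ncard :=
          Set.ncard_le_ncard hsub ((K.edgeSet.toFinite).image _)
      _ = K.edgeSet.ncard := Set.ncard_image_of_injective _
          (Sym2.map.injective (fun a b hab => (Prod.mk.injEq _ _ _ _ ▸ hab : _ ∧ _).1))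
  -- local edges fiberwise
  let g : Sym2 (β × Fin 3) → β := fun e => e.out.1.1
  have hEloc : Eloc.card = ∑ b : β, (Eloc.filter (fun e => g e = b)).card :=
    Finset.card_eq_sum_card_fiberwise (fun e _ => Finset.mem_univ (g e))
  -- per-copy edge counts
  have hfib : ∀ b : β, (Eloc.filter (fun e => g e = b)).card ≤ (Jb b).edgeSet.ncard := by
    intro b
    have hsub : ↑(Eloc.filter (fun e => g e = b)) ⊆ (Jb b).edgeSet := by
      intro e he
      simp only [Finset.coe_filter, Set.mem_setOf_eq, Finset.mem_filter, Eloc,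
        Set.Finite.mem_toFinset, Ef] at he
      obtain ⟨⟨he, hl⟩, hg⟩ := he
      induction e using Sym2.ind with
      | _ x y =>
        rw [SimpleGraph.Subgraph.mem_edgeSet] at he ⊢
        have hx1 : x.1 = b := by
          rw [← hg]
          exact hl x (Sym2.mem_mk_left x y) _ (Sym2.out_fst_mem s(x,y))
        have hy1 : y.1 = b := by
          rw [← hg]
          exact hl y (Sym2.mem_mk_right x y) _ (Sym2.out_fst_mem s(x,y))
        exact ⟨he, hx1, hy1⟩
    calc (Eloc.filter (fun e => g e = b)).card
        = (↑(Eloc.filter (fun e => g e = b)) : Set (Sym2 (β × Fin 3))).ncard := by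
          rw [Set.ncard_coe_finset]
      _ ≤ (Jb b).edgeSet.ncard := Set.ncard_le_ncard hsub ((Jb b).edgeSet.toFinite)
  -- vertex fiber counts
  have hVfib : Vf.card = ∑ b : β, (Jb b).verts.ncard := by
    rw [Finset.card_eq_sum_card_fiberwise (f := fun x => x.1) (fun x _ => Finset.mem_univ _)]
    refine Finset.sum_congr rfl (fun b _ => ?_)
    rw [Set.ncard_eq_toFinset_card ((Jb b).verts)]
    congr 1
    ext x
    simp only [Finset.mem_filter, Set.Finite.mem_toFinset, Vf]
    show x ∈ J.verts ∧ x.1 = b ↔ x ∈ J.verts ∩ {x | x.1 = b}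
    simp [Set.mem_inter_iff]
  -- root counts
  have hKcard : K.verts.ncard = ∑ b : β, (if (b, r) ∈ J.verts then 1 else 0) := by
    have himg : K.verts = (fun b => (b, r)) ⁻¹' J.verts := rfl
    rw [Set.ncard_eq_toFinset_card K.verts]
    rw [show (K.verts.toFinite.toFinset) = Finset.univ.filter (fun b => (b, r) ∈ J.verts) by
      ext b
      simp only [Set.Finite.mem_toFinset, Finset.mem_filter, Finset.mem_univ, true_and]
      exact Iff.rfl]
    rw [Finset.card_filter]
  -- per-copy quantities
  set v' : β → ℕ := fun b => (Jb b).verts.ncard with hv'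
  set e' : β → ℕ := fun b => (Jb b).edgeSet.ncard with he'
  set r' : β → ℕ := fun b => if (b, r) ∈ J.verts then 1 else 0 with hr'
  have hfiber3 : ∀ b : β, ({x : β × Fin 3 | x.1 = b}).ncard = 3 := by
    intro b
    have : {x : β × Fin 3 | x.1 = b} = Prod.mk b '' Set.univ := by
      ext ⟨x1, x2⟩
      simp only [Set.mem_setOf_eq, Set.image_univ, Set.mem_range, Prod.mk.injEq]
      constructor
      · rintro rfl; exact ⟨x2, rfl, rfl⟩
      · rintro ⟨y, rfl, rfl⟩; rfl
    rw [this, Set.ncard_image_of_injective _ (Prod.mk_right_injective b), Set.ncard_univ,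
      Nat.card_eq_fintype_card, Fintype.card_fin]
  have h2 : ∀ b : β, v' b ≤ 3 := by
    intro b
    rw [← hfiber3 b]
    exact Set.ncard_le_ncard Set.inter_subset_right (Set.toFinite _)
  have h1 : ∀ b : β, e' b ≤ (v' b).choose 2 := fun b => edgeSet_ncard_le_choose' (Jb b)
  have h3 : ∀ b : β, r' b ≤ 1 := by
    intro b; by_cases hb : (b, r) ∈ J.verts <;> simp [hr', hb]
  have h4 : ∀ b : β, r' b ≤ v' b := by
    intro b
    by_cases hb : (b, r) ∈ J.verts
    case pos => ?_
    case neg => simp [hr', hb]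
    rw [show r' b = 1 by simp [hr', hb]]
    have : (b, r) ∈ (Jb b).verts := ⟨hb, rfl⟩
    have h6 := Set.ncard_pos (Set.toFinite _) |>.mpr ⟨_, this⟩
    exact h6
  have h5 : ∀ b : β, (b, r) ∉ J.verts → v' b ≤ 2 := by
    intro b hb
    have hsub : (Jb b).verts ⊆ Prod.mk b '' {y : Fin 3 | y ≠ r} := by
      rintro ⟨x1, x2⟩ ⟨hx, hx1⟩
      simp only [Set.mem_setOf_eq] at hx1
      subst hx1
      refine ⟨x2, fun hx2 => hb ?_, rfl⟩
      · rwa [hx2] at hx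
    have hc : (Prod.mk b '' {y : Fin 3 | y ≠ r}).ncard = 2 := by
      rw [Set.ncard_image_of_injective _ (Prod.mk_right_injective b),
        show {y : Fin 3 | y ≠ r} = {r}ᶜ from rfl, Set.ncard_eq_toFinset_card',
        Set.toFinset_compl, Set.toFinset_singleton, Finset.card_compl]
      simp
    calc v' b ≤ (Prod.mk b '' {y : Fin 3 | y ≠ r}).ncard :=
          Set.ncard_le_ncard hsub (Set.toFinite _)
      _ = 2 := hc
  -- summed quantities
  set A := ∑ b : β, e' b with hA
  set B := ∑ b : β, v' b with hB
  set C := ∑ b : β, r' b with hC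
  set D := ∑ b : β, min (v' b - r' b) 1 with hD
  have hsum : A + 2 * C + D ≤ 2 * B := by
    have := Finset.sum_le_sum (f := fun b => e' b + 2 * r' b + min (v' b - r' b) 1)
      (g := fun b => 2 * v' b) (s := Finset.univ)
      (fun b _ => copy1' (h1 b) (h2 b) (h3 b) (h4 b))
    simpa only [Finset.sum_add_distrib, ← Finset.mul_sum, ← hA, ← hB, ← hC, ← hD] using this
  have hElocA : Eloc.card ≤ A := by
    rw [hEloc]
    exact Finset.sum_le_sum (fun b _ => hfib b)
  have hBv : B = J.verts.ncard := hVfib.symm.trans hVf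
  have hCk : C = K.verts.ncard := hKcard.symm
  have hEcard : J.edgeSet.ncard = Eloc.card + Erot.card := by rw [hsplit, hEf]
  have heKc : K.edgeSet.ncard ≤ (K.verts.ncard).choose 2 := edgeSet_ncard_le_choose' K
  -- case split on number of roots
  rcases Nat.lt_or_ge (K.verts.ncard) 2 with hk | hk
  · rcases Nat.lt_or_ge (K.verts.ncard) 1 with hk0 | hk1
    · -- no roots
      have hkz : K.verts.ncard = 0 := by omega
      have hCz : C = 0 := by rw [hCk, hkz]
      have hrz : ∀ b : β, r' b = 0 := by
        intro b
        have := Finset.sum_eq_zero_iff.mp (hC ▸ hCz : ∑ b : β, r' b = 0) b (Finset.mem_univ b)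
        exact this
      have h2A : 2 * A ≤ B := by
        rw [hA, hB, Finset.mul_sum]
        refine Finset.sum_le_sum (fun b _ => ?_)
        refine copy3' (h1 b) (h5 b ?_)
        intro hmem
        have := hrz b
        rw [hr'] at this
        simp [hmem] at this
      have heK0 : K.edgeSet.ncard = 0 := by
        have := heKc
        rw [hkz] at this
        simpa using this
      omega
    · -- exactly one root
      have hk1' : K.verts.ncard = 1 := by omega
      have hC1 : C = 1 := by rw [hCk, hk1']
      have heK0 : K.edgeSet.ncard = 0 := by
        have := heKc
        rw [hk1'] at this
        simpa using this
      have hD1 : 1 ≤ D := by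
        by_contra hD0
        have hDz : D = 0 := by omega
        have hterm : ∀ b : β, min (v' b - r' b) 1 = 0 := fun b =>
          Finset.sum_eq_zero_iff.mp (hD ▸ hDz : ∑ b : β, min (v' b - r' b) 1 = 0) b
            (Finset.mem_univ b)
        have hBC : B ≤ C := by
          rw [hB, hC]
          refine Finset.sum_le_sum (fun b _ => ?_)
          have := hterm b
          omega
        omega
      omega
  · -- at least two roots
    have heK2 : K.edgeSet.ncard + 3 ≤ 2 * K.verts.ncard := by
      rcases Nat.lt_or_ge (K.verts.ncard) 3 with hk3 | hk3
      · have hk2 : K.verts.ncard = 2 := by omega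
        have := heKc
        rw [hk2] at this
        simp only [Nat.choose_self] at this
        omega
      · exact hF K hk3
    omega
lemma witness {β : Type*} [Fintype β] [Nonempty β] (F : β → β → Prop) (r : Fin 3) :
    ∃ J : (SimpleGraph.fromRel (rootedProd F TT3 r)).Subgraph,
      J.verts.ncard = 3 ∧ J.edgeSet.ncard = 3 := by
  classical
  obtain ⟨b₀⟩ := ‹Nonempty β›
  have hadj : ∀ x y : β × Fin 3, (x.1 = b₀ ∧ y.1 = b₀ ∧ x.2 ≠ y.2) →
      (SimpleGraph.fromRel (rootedProd F TT3 r)).Adj x y := by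
    rintro x y ⟨hx, hy, hne⟩
    rw [SimpleGraph.fromRel_adj]
    refine ⟨fun he => hne (congrArg Prod.snd he), ?_⟩
    rcases lt_or_gt_of_ne hne with h | h
    · exact Or.inl (Or.inr ⟨hx.trans hy.symm, h⟩)
    · exact Or.inr (Or.inr ⟨hy.trans hx.symm, h⟩)
  let J₀ : (SimpleGraph.fromRel (rootedProd F TT3 r)).Subgraph :=
    { verts := {x | x.1 = b₀}
      Adj := fun x y => x.1 = b₀ ∧ y.1 = b₀ ∧ x.2 ≠ y.2
      adj_sub := fun {x y} h => hadj x y h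
      edge_vert := fun h => h.1
      symm := ⟨fun x y h => ⟨h.2.1, h.1, h.2.2.symm⟩⟩ }
  refine ⟨J₀, fiber_ncard b₀, ?_⟩
  have hedge : J₀.edgeSet = Sym2.map (Prod.mk b₀) '' (⊤ : SimpleGraph (Fin 3)).edgeSet := by
    ext e
    induction e using Sym2.ind with
    | _ x y =>
      simp only [SimpleGraph.Subgraph.mem_edgeSet]
      constructor
      · rintro ⟨hx, hy, hne⟩
        refine ⟨s(x.2, y.2), ?_, ?_⟩
        · rw [SimpleGraph.mem_edgeSet]
          exact hne
        · rw [Sym2.map_pair_eq]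
          have hxx : (b₀, x.2) = x := by rw [← hx]
          have hyy : (b₀, y.2) = y := by rw [← hy]
          rw [hxx, hyy]
      · rintro ⟨e', he', heq⟩
        induction e' using Sym2.ind with
        | _ u v =>
          rw [SimpleGraph.mem_edgeSet] at he'
          rw [Sym2.map_pair_eq, Sym2.eq_iff] at heq
          rcases heq with ⟨h1, h2⟩ | ⟨h1, h2⟩
          · subst h1; subst h2
            exact ⟨rfl, rfl, he'.ne⟩
          · subst h1; subst h2
            exact ⟨rfl, rfl, (SimpleGraph.Adj.ne he').symm⟩
  rw [hedge, Set.ncard_image_of_injective _ (Sym2.map.injective (Prod.mk_right_injective b₀)), topFin3]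

end AuxLemmas

/-- If `F⃗` is a (nonempty) oriented graph with `m₂(F⃗) ≤ 2`, then
`m₂(F⃗∘TT⃗₃′) = 2` for any choice of root of `TT⃗₃`. -/
theorem stmt14 {β : Type*} [Fintype β] [Nonempty β] (F : β → β → Prop)
    (hor : ∀ a b, F a b → ¬ F b a) (hm : m2Rel F ≤ 2) (r : Fin 3) :
    m2Rel (rootedProd F TT3 r) = 2 := by
  classical
  have hF : ∀ K : (SimpleGraph.fromRel F).Subgraph, 3 ≤ K.verts.ncard →
      K.edgeSet.ncard + 3 ≤ 2 * K.verts.ncard := by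
    intro K hK
    have hb : BddAbove {x : ℝ | ∃ J : (SimpleGraph.fromRel F).Subgraph,
        x = d2 J.verts.ncard J.edgeSet.ncard} := (m2_set_finite _).bddAbove
    have hle : d2 K.verts.ncard K.edgeSet.ncard ≤ m2Rel F := le_csSup hb ⟨K, rfl⟩
    exact d2_le_two_rev hK (hle.trans hm)
  obtain ⟨J₀, hJ₀v, hJ₀e⟩ := witness F r
  show m2 (SimpleGraph.fromRel (rootedProd F TT3 r)) = 2
  unfold m2
  apply le_antisymm
  · refine csSup_le ⟨_, ⟨J₀, rfl⟩⟩ ?_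
    rintro x ⟨J, rfl⟩
    exact d2_le_two (fun h3 => main_count F r hF J h3)
  · have h2mem : (2:ℝ) ∈ {x : ℝ | ∃ J : (SimpleGraph.fromRel (rootedProd F TT3 r)).Subgraph,
        x = d2 J.verts.ncard J.edgeSet.ncard} :=
      ⟨J₀, by rw [hJ₀v, hJ₀e, d2_three_three]⟩
    exact le_csSup (m2_set_finite _).bddAbove h2mem
end
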